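/- If f ∈ A is homogeneous and Q-closed, i.e. {𝒬,f} = 0, then the Hamiltonian vector field X_f is a Jacobi vector field in the sense that it is a derivation over the odd Jacobi bracket: X_f([g,h]_J) = [X_f(g),h]_J + (-1)^{(|f|+1)(|g|+1)} [g, X_f(h)]_J for all homogeneous g ∈ A and all h ∈ A. (This is the substantive direction of the proposition that a Hamiltonian vector field X_f is a Jacobi vector field if and only if f is Q-closed; note that when {𝒬,f} = 0 one has X_f(g) = (-1)^{|f|}[f,g]_J.) -/

import Mathlib

noncomputable section

/-- The sign `(-1)^i` for a parity `i : ZMod 2`. -/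
def zsign (i : ZMod 2) : ℝ := if i = 0 then 1 else -1

/-- A Poisson superalgebra: a unital associative `ℝ`-algebra `P` with a `ℤ/2`-grading
`P = P₀ ⊕ P₁` which is graded-commutative, equipped with an `ℝ`-bilinear, parity-preserving
bracket satisfying graded antisymmetry, the graded Leibniz rule and the graded Jacobi
identity (for homogeneous elements). -/
structure PoissonSuperalgebra (P : Type*) [Ring P] [Algebra ℝ P] where
  grade : ZMod 2 → Submodule ℝ P
  sup_grade : grade 0 ⊔ grade 1 = ⊤
  inf_grade : grade 0 ⊓ grade 1 = ⊥
  one_mem : (1 : P) ∈ grade 0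
  mul_mem : ∀ {i j : ZMod 2} {a b : P}, a ∈ grade i → b ∈ grade j → a * b ∈ grade (i + j)
  super_comm : ∀ {i j : ZMod 2} {a b : P}, a ∈ grade i → b ∈ grade j →
    a * b = zsign (i * j) • (b * a)
  bracket : P →ₗ[ℝ] P →ₗ[ℝ] P
  bracket_mem : ∀ {i j : ZMod 2} {a b : P}, a ∈ grade i → b ∈ grade j →
    bracket a b ∈ grade (i + j)
  bracket_antisymm : ∀ {i j : ZMod 2} {a b : P}, a ∈ grade i → b ∈ grade j →
    bracket a b = -(zsign (i * j) • bracket b a)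
  bracket_leibniz : ∀ {i j k : ZMod 2} {a b c : P}, a ∈ grade i → b ∈ grade j →
    c ∈ grade k → bracket a (b * c) = bracket a b * c + zsign (i * j) • (b * bracket a c)
  bracket_jacobi : ∀ {i j k : ZMod 2} {a b c : P}, a ∈ grade i → b ∈ grade j →
    c ∈ grade k →
    bracket a (bracket b c) = bracket (bracket a b) c + zsign (i * j) • bracket b (bracket a c)

variable {P : Type*} [Ring P] [Algebra ℝ P]

/-- The odd Jacobi bracket `[f,g]_J` associated to an odd Jacobi structure `(S, Q)`,
for `f` homogeneous of parity `i`: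
`[f,g]_J = (-1)^{|f|+1} {{S,f},g} - (-1)^{|f|+1} {Q, f g}`. -/
def oddJacobiBracket (psa : PoissonSuperalgebra P) (S Q : P) (i : ZMod 2) (f g : P) : P :=
  zsign (i + 1) • psa.bracket (psa.bracket S f) g - zsign (i + 1) • psa.bracket Q (f * g)

/-- The Hamiltonian vector field of a homogeneous `f` of parity `i`, acting on `g`:
`X_f(g) = (-1)^{|f|} [f,g]_J - {Q,f}·g`. -/
def hamiltonianVF (psa : PoissonSuperalgebra P) (S Q : P) (i : ZMod 2) (f g : P) : P :=
  zsign i • oddJacobiBracket psa S Q i f g - psa.bracket Q f * g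


lemma zsign_zero : zsign 0 = 1 := by simp [zsign]
lemma zsign_one : zsign 1 = -1 := by simp [zsign]
lemma zsign_sq (x : ZMod 2) : zsign x * zsign x = 1 := by unfold zsign; split <;> norm_num
lemma zmod2_cases (x : ZMod 2) : x = 0 ∨ x = 1 := by fin_cases x <;> [exact Or.inl rfl; exact Or.inr rfl]

private lemma half_of_double {M : Type*} [AddCommGroup M] [Module ℝ M] {v c : M}
    (hv : v = c + (-1:ℝ) • v) : v = (2⁻¹:ℝ) • c := by
  have h2 : v + v = c := by
    nth_rewrite 1 [hv]
    rw [neg_one_smul]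
    abel
  calc v = (2⁻¹:ℝ) • ((2:ℝ) • v) := by rw [smul_smul]; norm_num
    _ = (2⁻¹:ℝ) • (v + v) := by rw [two_smul]
    _ = (2⁻¹:ℝ) • c := by rw [h2]

lemma oddJacobiBracket_add_right (psa : PoissonSuperalgebra P) (S Q : P) (j : ZMod 2)
    (g x y : P) : oddJacobiBracket psa S Q j g (x + y)
      = oddJacobiBracket psa S Q j g x + oddJacobiBracket psa S Q j g y := by
  simp only [oddJacobiBracket, mul_add, map_add, smul_add]
  abel

lemma hamiltonianVF_add_right (psa : PoissonSuperalgebra P) (S Q : P) (i : ZMod 2)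
    (f x y : P) : hamiltonianVF psa S Q i f (x + y)
      = hamiltonianVF psa S Q i f x + hamiltonianVF psa S Q i f y := by
  simp only [hamiltonianVF, oddJacobiBracket_add_right, mul_add, smul_add]
  abel

lemma hamiltonianVF_jacobi_aux
    (psa : PoissonSuperalgebra P) (A : Subalgebra ℝ P) (S Q : P)
    (hA_bracket : ∀ f ∈ A, ∀ g ∈ A, psa.bracket f g = 0)
    (hS : S ∈ psa.grade 1) (hQ : Q ∈ psa.grade 1)
    (hQQ : psa.bracket Q Q = 0) (hQS : psa.bracket Q S = 0)
    (hSS : psa.bracket S S = -((2 : ℝ) • (Q * S)))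
    (hQA : ∀ f ∈ A, psa.bracket Q f ∈ A)
    (hSA : ∀ f ∈ A, ∀ g ∈ A, psa.bracket (psa.bracket S f) g ∈ A)
    {i j k : ZMod 2} {f g h : P} (hf : f ∈ A) (hfi : f ∈ psa.grade i)
    (hQf : psa.bracket Q f = 0)
    (hg : g ∈ A) (hgj : g ∈ psa.grade j) (hh : h ∈ A) (hhk : h ∈ psa.grade k) :
    hamiltonianVF psa S Q i f (oddJacobiBracket psa S Q j g h)
      = oddJacobiBracket psa S Q (i + j + 1) (hamiltonianVF psa S Q i f g) h
        + zsign ((i + 1) * (j + 1)) •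
            oddJacobiBracket psa S Q j g (hamiltonianVF psa S Q i f h) := by
  have ha : psa.bracket S f ∈ psa.grade (1+i) := psa.bracket_mem hS hfi
  have hb : psa.bracket S g ∈ psa.grade (1+j) := psa.bracket_mem hS hgj
  have hdg : psa.bracket Q g ∈ psa.grade (1+j) := psa.bracket_mem hQ hgj
  have hdh : psa.bracket Q h ∈ psa.grade (1+k) := psa.bracket_mem hQ hhk
  have hag : psa.bracket (psa.bracket S f) g ∈ psa.grade (1+i+j) := psa.bracket_mem ha hgj
  have hah : psa.bracket (psa.bracket S f) h ∈ psa.grade (1+i+k) := psa.bracket_mem ha hhk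
  have hsdg : psa.bracket S (psa.bracket Q g) ∈ psa.grade (1+(1+j)) := psa.bracket_mem hS hdg
  have hdgA : psa.bracket Q g ∈ A := hQA g hg
  have hdhA : psa.bracket Q h ∈ A := hQA h hh
  have hagA : psa.bracket (psa.bracket S f) g ∈ A := hSA f hf g hg
  have hfg0 : psa.bracket f g = 0 := hA_bracket f hf g hg
  have hhf0 : psa.bracket h f = 0 := hA_bracket h hh f hf
  have hhdg0 : psa.bracket h (psa.bracket Q g) = 0 := hA_bracket h hh _ hdgA
  have hhag0 : psa.bracket h (psa.bracket (psa.bracket S f) g) = 0 := hA_bracket h hh _ hagA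
  have hQa : psa.bracket Q (psa.bracket S f) = 0 := by
    rw [psa.bracket_jacobi hQ hS hfi, hQS, hQf]
    simp
  have hQdg : psa.bracket Q (psa.bracket Q g) = 0 := by
    have h1 := psa.bracket_jacobi hQ hQ hgj
    rw [hQQ] at h1
    simp only [map_zero, LinearMap.zero_apply, zero_add, mul_one, zsign_one] at h1
    have h2 : psa.bracket Q (psa.bracket Q g) = (2⁻¹:ℝ) • (0:P) :=
      half_of_double (by rw [zero_add]; exact h1)
    simpa using h2
  have hQdh : psa.bracket Q (psa.bracket Q h) = 0 := by
    have h1 := psa.bracket_jacobi hQ hQ hhk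
    rw [hQQ] at h1
    simp only [map_zero, LinearMap.zero_apply, zero_add, mul_one, zsign_one] at h1
    have h2 : psa.bracket Q (psa.bracket Q h) = (2⁻¹:ℝ) • (0:P) :=
      half_of_double (by rw [zero_add]; exact h1)
    simpa using h2
  have hQb : psa.bracket Q (psa.bracket S g) = -(psa.bracket S (psa.bracket Q g)) := by
    rw [psa.bracket_jacobi hQ hS hgj, hQS]
    simp [zsign_one]
  have hSa : psa.bracket S (psa.bracket S f) = -(Q * psa.bracket S f) := by
    have hQSf : psa.bracket (Q*S) f = Q * psa.bracket S f := by
      rw [psa.bracket_antisymm (psa.mul_mem hQ hS) hfi, psa.bracket_leibniz hfi hQ hS,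
          psa.bracket_antisymm hfi hQ, hQf, psa.bracket_antisymm hfi hS]
      simp [smul_smul, zsign_sq, mul_smul_comm,
        show ((1:ZMod 2)+1) = 0 from by decide, zsign_zero]
    have h1 := psa.bracket_jacobi hS hS hfi
    rw [hSS] at h1
    simp only [map_neg, map_smul, LinearMap.neg_apply, LinearMap.smul_apply, hQSf,
      one_mul, mul_one, zsign_one] at h1
    have h2 := half_of_double h1
    rw [h2, smul_neg, smul_smul]
    norm_num
  simp only [hamiltonianVF, oddJacobiBracket, hQf, zero_mul, sub_zero]
  rw [psa.bracket_leibniz hQ hgj hhk, psa.bracket_leibniz hQ hfi hgj,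
      psa.bracket_leibniz hQ hfi hhk, hQf]
  simp only [map_sub, map_add, map_smul, map_neg, map_zero, LinearMap.sub_apply,
    LinearMap.add_apply, LinearMap.smul_apply, LinearMap.neg_apply, LinearMap.zero_apply,
    smul_sub, smul_add, smul_neg, smul_smul, sub_mul, add_mul, mul_add, mul_sub,
    smul_mul_assoc, mul_smul_comm, neg_mul, mul_neg, neg_smul, neg_neg, zero_mul,
    mul_zero, add_zero, zero_add, sub_zero, zero_sub, smul_zero, mul_assoc,
    hQf, hQdg, hQdh, hQa, hhf0, hfg0, hhdg0, hhag0]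
  rw [psa.bracket_jacobi ha hb hhk,
      psa.bracket_leibniz ha hdg hhk,
      psa.bracket_leibniz ha hgj hdh,
      psa.bracket_leibniz hQ hfi (psa.bracket_mem hb hhk),
      psa.bracket_leibniz hQ hfi (psa.mul_mem hdg hhk),
      psa.bracket_leibniz hQ hfi (psa.mul_mem hgj hdh),
      psa.bracket_leibniz hS hfi hdg,
      psa.bracket_leibniz hQ hag hhk,
      psa.bracket_leibniz hb hfi hdh,
      psa.bracket_leibniz hQ hgj hah,
      psa.bracket_leibniz hQ hgj (psa.mul_mem hfi hdh)]
  rw [psa.bracket_leibniz hQ hdg hhk,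
      psa.bracket_leibniz hQ hgj hdh,
      psa.bracket_jacobi hQ hb hhk, hQb,
      psa.bracket_jacobi hQ ha hgj,
      psa.bracket_jacobi hQ ha hhk,
      psa.bracket_leibniz hQ hfi hdh]
  rw [psa.bracket_jacobi ha hS hgj,
      psa.bracket_antisymm ha hS, hSa]
  rw [psa.bracket_antisymm hb hfi, psa.bracket_jacobi hfi hS hgj,
      psa.bracket_antisymm hfi hS]
  simp only [map_sub, map_add, map_smul, map_neg, map_zero, LinearMap.sub_apply,
    LinearMap.add_apply, LinearMap.smul_apply, LinearMap.neg_apply, LinearMap.zero_apply,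
    smul_sub, smul_add, smul_neg, smul_smul, sub_mul, add_mul, mul_add, mul_sub,
    smul_mul_assoc, mul_smul_comm, neg_mul, mul_neg, neg_smul, neg_neg, zero_mul,
    mul_zero, add_zero, zero_add, sub_zero, zero_sub, smul_zero, mul_assoc,
    hQf, hQdg, hQdh, hQa, hhf0, hfg0, hhdg0, hhag0]
  rw [psa.bracket_antisymm (psa.mul_mem hQ ha) hgj]
  simp only [map_sub, map_add, map_smul, map_neg, map_zero, LinearMap.sub_apply,
    LinearMap.add_apply, LinearMap.smul_apply, LinearMap.neg_apply, LinearMap.zero_apply,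
    smul_sub, smul_add, smul_neg, smul_smul, sub_mul, add_mul, mul_add, mul_sub,
    smul_mul_assoc, mul_smul_comm, neg_mul, mul_neg, neg_smul, neg_neg, zero_mul,
    mul_zero, add_zero, zero_add, sub_zero, zero_sub, smul_zero, mul_assoc,
    hQf, hQdg, hQdh, hQa, hhf0, hfg0, hhdg0, hhag0]
  rw [psa.bracket_leibniz hgj hQ ha, psa.bracket_antisymm hgj hQ,
      psa.bracket_antisymm hgj ha]
  simp only [map_sub, map_add, map_smul, map_neg, map_zero, LinearMap.sub_apply,
    LinearMap.add_apply, LinearMap.smul_apply, LinearMap.neg_apply, LinearMap.zero_apply,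
    smul_sub, smul_add, smul_neg, smul_smul, sub_mul, add_mul, mul_add, mul_sub,
    smul_mul_assoc, mul_smul_comm, neg_mul, mul_neg, neg_smul, neg_neg, zero_mul,
    mul_zero, add_zero, zero_add, sub_zero, zero_sub, smul_zero, mul_assoc,
    hQf, hQdg, hQdh, hQa, hhf0, hfg0, hhdg0, hhag0]
  rw [psa.bracket_antisymm (psa.mul_mem hdg ha) hhk,
      psa.bracket_leibniz hhk hdg ha,
      psa.bracket_antisymm (psa.mul_mem hQ hag) hhk,
      psa.bracket_leibniz hhk hQ hag,
      psa.bracket_antisymm (psa.mul_mem ha hdg) hhk,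
      psa.bracket_leibniz hhk ha hdg,
      psa.bracket_antisymm (psa.mul_mem hfi hsdg) hhk,
      psa.bracket_leibniz hhk hfi hsdg,
      psa.bracket_antisymm hhk hsdg,
      psa.bracket_antisymm hhk ha,
      psa.bracket_antisymm hhk hQ]
  simp only [map_sub, map_add, map_smul, map_neg, map_zero, LinearMap.sub_apply,
    LinearMap.add_apply, LinearMap.smul_apply, LinearMap.neg_apply, LinearMap.zero_apply,
    smul_sub, smul_add, smul_neg, smul_smul, sub_mul, add_mul, mul_add, mul_sub,
    smul_mul_assoc, mul_smul_comm, neg_mul, mul_neg, neg_smul, neg_neg, zero_mul,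
    mul_zero, add_zero, zero_add, sub_zero, zero_sub, smul_zero, mul_assoc,
    hQf, hQdg, hQdh, hQa, hhf0, hfg0, hhdg0, hhag0]
  rw [psa.super_comm hah hdg, psa.super_comm hdh hag]
  have Ec : psa.bracket Q g * (f * psa.bracket Q h)
      = zsign ((1+j)*i) • (f * (psa.bracket Q g * psa.bracket Q h)) := by
    rw [← mul_assoc, psa.super_comm hdg hfi, smul_mul_assoc, mul_assoc]
  rw [Ec]
  simp only [map_sub, map_add, map_smul, map_neg, map_zero, LinearMap.sub_apply,
    LinearMap.add_apply, LinearMap.smul_apply, LinearMap.neg_apply, LinearMap.zero_apply,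
    smul_sub, smul_add, smul_neg, smul_smul, sub_mul, add_mul, mul_add, mul_sub,
    smul_mul_assoc, mul_smul_comm, neg_mul, mul_neg, neg_smul, neg_neg, zero_mul,
    mul_zero, add_zero, zero_add, sub_zero, zero_sub, smul_zero, mul_assoc,
    hQf, hQdg, hQdh, hQa, hhf0, hfg0, hhdg0, hhag0]
  clear Ec hSa hQb hQdh hQdg hQa hhag0 hhdg0 hhf0 hfg0 hagA hdhA hdgA hsdg hah hag hdh hdg hb ha
  rcases zmod2_cases i with rfl|rfl <;> rcases zmod2_cases j with rfl|rfl <;>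
    rcases zmod2_cases k with rfl|rfl <;>
    · simp only [one_mul, mul_one, mul_zero, zero_mul, add_zero, zero_add,
        show ((1:ZMod 2)+1) = 0 from by decide, zsign_zero, zsign_one]
      norm_num
      module


/-- Proposition 2.4 (substantive direction): if `f` is Q-closed, `{𝒬,f} = 0`, then the
Hamiltonian vector field `X_f` is a derivation over the odd Jacobi bracket:
`X_f([g,h]_J) = [X_f(g),h]_J + (-1)^{(|f|+1)(|g|+1)} [g, X_f(h)]_J`. -/
theorem hamiltonianVF_jacobi_of_Qclosed
    (psa : PoissonSuperalgebra P) (A : Subalgebra ℝ P) (S Q : P)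
    (hA_graded : ∀ a ∈ A, ∃ a₀ a₁ : P, a₀ ∈ A ∧ a₀ ∈ psa.grade 0 ∧
      a₁ ∈ A ∧ a₁ ∈ psa.grade 1 ∧ a = a₀ + a₁)
    (hA_bracket : ∀ f ∈ A, ∀ g ∈ A, psa.bracket f g = 0)
    (hS : S ∈ psa.grade 1) (hQ : Q ∈ psa.grade 1)
    (hQQ : psa.bracket Q Q = 0) (hQS : psa.bracket Q S = 0)
    (hSS : psa.bracket S S = -((2 : ℝ) • (Q * S)))
    (hQA : ∀ f ∈ A, psa.bracket Q f ∈ A)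
    (hSA : ∀ f ∈ A, ∀ g ∈ A, psa.bracket (psa.bracket S f) g ∈ A)
    {i j : ZMod 2} {f g h : P} (hf : f ∈ A) (hfi : f ∈ psa.grade i)
    (hQf : psa.bracket Q f = 0)
    (hg : g ∈ A) (hgj : g ∈ psa.grade j) (hh : h ∈ A) :
    hamiltonianVF psa S Q i f (oddJacobiBracket psa S Q j g h)
      = oddJacobiBracket psa S Q (i + j + 1) (hamiltonianVF psa S Q i f g) h
        + zsign ((i + 1) * (j + 1)) •
            oddJacobiBracket psa S Q j g (hamiltonianVF psa S Q i f h) := by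
  obtain ⟨h₀, h₁, h₀A, h₀g, h₁A, h₁g, rfl⟩ := hA_graded h hh
  rw [oddJacobiBracket_add_right, hamiltonianVF_add_right, hamiltonianVF_add_right,
    oddJacobiBracket_add_right, oddJacobiBracket_add_right,
    hamiltonianVF_jacobi_aux psa A S Q hA_bracket hS hQ hQQ hQS hSS hQA hSA hf hfi hQf hg hgj h₀A h₀g,
    hamiltonianVF_jacobi_aux psa A S Q hA_bracket hS hQ hQQ hQS hSS hQA hSA hf hfi hQf hg hgj h₁A h₁g,
    smul_add]
  abel
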